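/- There exists a linear subspace L of M_4(ℂ) such that both L and its pre-annihilator L_⊥ (under the trace pairing) are transitive; equivalently, neither L nor L_⊥ contains a non-zero matrix of rank one. Concretely, one may take L = { [[A, Φ(B)],[B, A]] : A, B ∈ M_2(ℂ) } where Φ([[a,b],[c,d]]) = [[d,2c],[b,a]]. -/

import Mathlib

open Matrix

/-- `k`-transitivity for a subspace of matrices (viewed as linear maps). -/
def kTrans {α β : Type*} [Fintype α] [Fintype β]
    (L : Submodule ℂ (Matrix α β ℂ)) (k : ℕ) : Prop :=
  ∀ x : Fin k → (β → ℂ), LinearIndependent ℂ x →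
    ∀ y : Fin k → (α → ℂ), ∃ A ∈ L, ∀ i, A.mulVec (x i) = y i

/-- The pre-annihilator of `L` under the trace pairing `⟨A, T⟩ = Tr (A * T)`. -/
noncomputable def preAnn {α β : Type*} [Fintype α] [Fintype β]
    (L : Submodule ℂ (Matrix α β ℂ)) : Submodule ℂ (Matrix β α ℂ) where
  carrier := {T | ∀ A ∈ L, Matrix.trace (A * T) = 0}
  add_mem' := by
    intro T S hT hS A hA
    simp [Matrix.mul_add, hT A hA, hS A hA]
  zero_mem' := by
    intro A hA
    simp
  smul_mem' := by
    intro c T hT A hA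
    simp [Matrix.mul_smul, hT A hA]

/-- The map `Φ([[a,b],[c,d]]) = [[d,2c],[b,a]]`. -/
noncomputable def phi (X : Matrix (Fin 2) (Fin 2) ℂ) : Matrix (Fin 2) (Fin 2) ℂ :=
  !![X 1 1, 2 * X 1 0; X 0 1, X 0 0]

section Aux

@[simp] lemma fsfe0 : finSumFinEquiv.symm (0:Fin 4) = (Sum.inl 0 : Fin 2 ⊕ Fin 2) := by decide
@[simp] lemma fsfe1 : finSumFinEquiv.symm (1:Fin 4) = (Sum.inl 1 : Fin 2 ⊕ Fin 2) := by decide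
@[simp] lemma fsfe2 : finSumFinEquiv.symm (2:Fin 4) = (Sum.inr 0 : Fin 2 ⊕ Fin 2) := by decide
@[simp] lemma fsfe3 : finSumFinEquiv.symm (3:Fin 4) = (Sum.inr 1 : Fin 2 ⊕ Fin 2) := by decide

def Lconds (M : Matrix (Fin 4) (Fin 4) ℂ) : Prop :=
  M 0 0 = M 2 2 ∧ M 0 1 = M 2 3 ∧ M 1 0 = M 3 2 ∧ M 1 1 = M 3 3 ∧
  M 0 2 = M 3 1 ∧ M 0 3 = 2 * M 3 0 ∧ M 1 2 = M 2 1 ∧ M 1 3 = M 2 0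

set_option linter.unnecessarySeqFocus false in
noncomputable def Lsub : Submodule ℂ (Matrix (Fin 4) (Fin 4) ℂ) where
  carrier := {M | Lconds M}
  add_mem' := by
    rintro a b ⟨h1,h2,h3,h4,h5,h6,h7,h8⟩ ⟨g1,g2,g3,g4,g5,g6,g7,g8⟩
    refine ⟨?_,?_,?_,?_,?_,?_,?_,?_⟩ <;> simp [Matrix.add_apply, *] <;> ring
  zero_mem' := by refine ⟨?_,?_,?_,?_,?_,?_,?_,?_⟩ <;> simp
  smul_mem' := by
    rintro c a ⟨h1,h2,h3,h4,h5,h6,h7,h8⟩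
    refine ⟨?_,?_,?_,?_,?_,?_,?_,?_⟩ <;> simp [Matrix.smul_apply, *] <;> ring

def Sset : Set (Matrix (Fin 4) (Fin 4) ℂ) :=
  {C | ∃ A B : Matrix (Fin 2) (Fin 2) ℂ,
      C = Matrix.reindex finSumFinEquiv finSumFinEquiv (Matrix.fromBlocks A (phi B) B A)}

lemma mem_S_iff (M : Matrix (Fin 4) (Fin 4) ℂ) : M ∈ Sset ↔ Lconds M := by
  constructor
  · rintro ⟨A, B, rfl⟩
    refine ⟨?_,?_,?_,?_,?_,?_,?_,?_⟩ <;>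
      simp [Matrix.reindex_apply, Matrix.submatrix_apply, phi]
  · rintro ⟨h1,h2,h3,h4,h5,h6,h7,h8⟩
    refine ⟨!![M 0 0, M 0 1; M 1 0, M 1 1], !![M 2 0, M 2 1; M 3 0, M 3 1], ?_⟩
    ext i j
    fin_cases i <;> fin_cases j <;>
      simp [Matrix.reindex_apply, Matrix.submatrix_apply, phi, h1, h2, h3, h4, h5, h6, h7, h8]

lemma span_S_eq : Submodule.span ℂ Sset = Lsub :=
  le_antisymm (Submodule.span_le.mpr fun M hM => (mem_S_iff M).mp hM)
    (fun M hM => Submodule.subset_span ((mem_S_iff M).mpr hM))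

def Pconds (T : Matrix (Fin 4) (Fin 4) ℂ) : Prop :=
  T 0 0 = -T 2 2 ∧ T 0 1 = -T 2 3 ∧ T 1 0 = -T 3 2 ∧ T 1 1 = -T 3 3 ∧
  T 0 2 = -T 3 1 ∧ T 0 3 = -(2 * T 3 0) ∧ T 1 2 = -T 2 1 ∧ T 1 3 = -T 2 0

lemma mem_preAnn_iff (T : Matrix (Fin 4) (Fin 4) ℂ) : T ∈ preAnn Lsub ↔ Pconds T := by
  constructor
  · intro hT
    have i1 := hT !![1,0,0,0;0,0,0,0;0,0,1,0;0,0,0,0]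
      (by show Lconds _; simp only [Lconds, Matrix.of_apply, Matrix.cons_val]; norm_num)
    have i2 := hT !![0,1,0,0;0,0,0,0;0,0,0,1;0,0,0,0]
      (by show Lconds _; simp only [Lconds, Matrix.of_apply, Matrix.cons_val]; norm_num)
    have i3 := hT !![0,0,0,0;1,0,0,0;0,0,0,0;0,0,1,0]
      (by show Lconds _; simp only [Lconds, Matrix.of_apply, Matrix.cons_val]; norm_num)
    have i4 := hT !![0,0,0,0;0,1,0,0;0,0,0,0;0,0,0,1]
      (by show Lconds _; simp only [Lconds, Matrix.of_apply, Matrix.cons_val]; norm_num)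
    have i5 := hT !![0,0,0,0;0,0,0,1;1,0,0,0;0,0,0,0]
      (by show Lconds _; simp only [Lconds, Matrix.of_apply, Matrix.cons_val]; norm_num)
    have i6 := hT !![0,0,0,0;0,0,1,0;0,1,0,0;0,0,0,0]
      (by show Lconds _; simp only [Lconds, Matrix.of_apply, Matrix.cons_val]; norm_num)
    have i7 := hT !![0,0,0,2;0,0,0,0;0,0,0,0;1,0,0,0]
      (by show Lconds _; simp only [Lconds, Matrix.of_apply, Matrix.cons_val]; norm_num)
    have i8 := hT !![0,0,1,0;0,0,0,0;0,0,0,0;0,1,0,0]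
      (by show Lconds _; simp only [Lconds, Matrix.of_apply, Matrix.cons_val]; norm_num)
    simp [Matrix.trace, Matrix.mul_apply, Fin.sum_univ_four, Matrix.diag,
      Matrix.vecHead, Matrix.vecTail] at i1 i2 i3 i4 i5 i6 i7 i8
    refine ⟨by linear_combination i1, by linear_combination i3, by linear_combination i2,
      by linear_combination i4, by linear_combination i5, by linear_combination i7,
      by linear_combination i6, by linear_combination i8⟩
  · rintro ⟨p1,p2,p3,p4,p5,p6,p7,p8⟩ A hA
    have hc : Lconds A := hA
    obtain ⟨a1,a2,a3,a4,a5,a6,a7,a8⟩ := hc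
    simp only [Matrix.trace, Matrix.mul_apply, Fin.sum_univ_four, Matrix.diag]
    linear_combination T 0 0 * a1 + A 2 2 * p1 + T 1 0 * a2 + A 2 3 * p3 +
      T 0 1 * a3 + A 3 2 * p2 + T 1 1 * a4 + A 3 3 * p4 +
      T 2 0 * a5 + A 3 1 * p8 + T 3 0 * a6 + A 3 0 * p6 +
      T 2 1 * a7 + A 2 1 * p7 + T 3 1 * a8 + A 2 0 * p5

lemma Lconds_of_ann (M : Matrix (Fin 4) (Fin 4) ℂ)
    (hm : ∀ T ∈ preAnn Lsub, Matrix.trace (T * M) = 0) : Lconds M := by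
  have i1 := hm !![1,0,0,0;0,0,0,0;0,0,-1,0;0,0,0,0]
    ((mem_preAnn_iff _).mpr (by simp only [Pconds, Matrix.of_apply, Matrix.cons_val]; norm_num))
  have i2 := hm !![0,1,0,0;0,0,0,0;0,0,0,-1;0,0,0,0]
    ((mem_preAnn_iff _).mpr (by simp only [Pconds, Matrix.of_apply, Matrix.cons_val]; norm_num))
  have i3 := hm !![0,0,0,0;1,0,0,0;0,0,0,0;0,0,-1,0]
    ((mem_preAnn_iff _).mpr (by simp only [Pconds, Matrix.of_apply, Matrix.cons_val]; norm_num))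
  have i4 := hm !![0,0,0,0;0,1,0,0;0,0,0,0;0,0,0,-1]
    ((mem_preAnn_iff _).mpr (by simp only [Pconds, Matrix.of_apply, Matrix.cons_val]; norm_num))
  have i5 := hm !![0,0,0,0;0,0,0,-1;1,0,0,0;0,0,0,0]
    ((mem_preAnn_iff _).mpr (by simp only [Pconds, Matrix.of_apply, Matrix.cons_val]; norm_num))
  have i6 := hm !![0,0,0,0;0,0,-1,0;0,1,0,0;0,0,0,0]
    ((mem_preAnn_iff _).mpr (by simp only [Pconds, Matrix.of_apply, Matrix.cons_val]; norm_num))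
  have i7 := hm !![0,0,0,-2;0,0,0,0;0,0,0,0;1,0,0,0]
    ((mem_preAnn_iff _).mpr (by simp only [Pconds, Matrix.of_apply, Matrix.cons_val]; norm_num))
  have i8 := hm !![0,0,-1,0;0,0,0,0;0,0,0,0;0,1,0,0]
    ((mem_preAnn_iff _).mpr (by simp only [Pconds, Matrix.of_apply, Matrix.cons_val]; norm_num))
  simp [Matrix.trace, Matrix.mul_apply, Fin.sum_univ_four, Matrix.diag,
    Matrix.vecHead, Matrix.vecTail] at i1 i2 i3 i4 i5 i6 i7 i8
  exact ⟨by linear_combination i1, by linear_combination i3, by linear_combination i2,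
    by linear_combination i4, by linear_combination i5, by linear_combination i7,
    by linear_combination i6, by linear_combination i8⟩

lemma zero_of_mul {a b : ℂ} (ha : a ≠ 0) (h : a * b = 0) : b = 0 :=
  (mul_eq_zero.mp h).resolve_left ha

end Aux

lemma core (ε : ℂ) (hε : ε ≠ 0) (u0 u1 u2 u3 v0 v1 v2 v3 : ℂ)
    (e1 : u0*v0 = ε*(u2*v2)) (e2 : u0*v1 = ε*(u2*v3)) (e3 : u1*v0 = ε*(u3*v2))
    (e4 : u1*v1 = ε*(u3*v3)) (e5 : u0*v2 = ε*(u3*v1)) (e6 : u0*v3 = 2*ε*(u3*v0))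
    (e7 : u1*v2 = ε*(u2*v1)) (e8 : u1*v3 = ε*(u2*v0)) :
    (u0=0 ∧ u1=0 ∧ u2=0 ∧ u3=0) ∨ (v0=0 ∧ v1=0 ∧ v2=0 ∧ v3=0) := by
  have key : u2 = 0 ∨ u3 = 0 ∨ v0 = 0 ∨ v1 = 0 := by
    have h : ε*(ε*(u2*(u3*(v0*v1)))) = 0 := by
      linear_combination -(u1*v2)*e6 - (2*ε*(u3*v0))*e7 + (u1*v3)*e5 + (ε*(u3*v1))*e8
    have h' := zero_of_mul hε (zero_of_mul hε h)
    rcases mul_eq_zero.mp h' with h2 | h'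
    · exact Or.inl h2
    rcases mul_eq_zero.mp h' with h3 | h'
    · exact Or.inr (Or.inl h3)
    rcases mul_eq_zero.mp h' with h4 | h4
    · exact Or.inr (Or.inr (Or.inl h4))
    · exact Or.inr (Or.inr (Or.inr h4))
  rcases key with hu2 | hu3 | hv0 | hv1
  · -- u2 = 0
    rcases eq_or_ne u0 0 with h0 | h0
    · rcases eq_or_ne u1 0 with h1 | h1
      · rcases eq_or_ne u3 0 with h3 | h3
        · exact Or.inl ⟨h0, h1, hu2, h3⟩
        · have hv0 : v0 = 0 := zero_of_mul (by exact mul_ne_zero (mul_ne_zero two_ne_zero hε) h3)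
            (by linear_combination -e6 + v3*h0)
          have hv1 : v1 = 0 := zero_of_mul (mul_ne_zero hε h3) (by linear_combination -e5 + v2*h0)
          have hv2 : v2 = 0 := zero_of_mul (mul_ne_zero hε h3) (by linear_combination -e3 + v0*h1)
          have hv3 : v3 = 0 := zero_of_mul (mul_ne_zero hε h3) (by linear_combination -e4 + v1*h1)
          exact Or.inr ⟨hv0, hv1, hv2, hv3⟩
      · have hv2 : v2 = 0 := zero_of_mul h1 (by linear_combination e7 + ε*v1*hu2)
        have hv3 : v3 = 0 := zero_of_mul h1 (by linear_combination e8 + ε*v0*hu2)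
        have hv0 : v0 = 0 := zero_of_mul h1 (by linear_combination e3 + ε*u3*hv2)
        have hv1 : v1 = 0 := zero_of_mul h1 (by linear_combination e4 + ε*u3*hv3)
        exact Or.inr ⟨hv0, hv1, hv2, hv3⟩
    · have hv0 : v0 = 0 := zero_of_mul h0 (by linear_combination e1 + ε*v2*hu2)
      have hv1 : v1 = 0 := zero_of_mul h0 (by linear_combination e2 + ε*v3*hu2)
      have hv2 : v2 = 0 := zero_of_mul h0 (by linear_combination e5 + ε*u3*hv1)
      have hv3 : v3 = 0 := zero_of_mul h0 (by linear_combination e6 + 2*ε*u3*hv0)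
      exact Or.inr ⟨hv0, hv1, hv2, hv3⟩
  · -- u3 = 0
    rcases eq_or_ne u0 0 with h0 | h0
    · rcases eq_or_ne u1 0 with h1 | h1
      · rcases eq_or_ne u2 0 with h2 | h2
        · exact Or.inl ⟨h0, h1, h2, hu3⟩
        · have hv2 : v2 = 0 := zero_of_mul (mul_ne_zero hε h2) (by linear_combination -e1 + v0*h0)
          have hv3 : v3 = 0 := zero_of_mul (mul_ne_zero hε h2) (by linear_combination -e2 + v1*h0)
          have hv1 : v1 = 0 := zero_of_mul (mul_ne_zero hε h2) (by linear_combination -e7 + v2*h1)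
          have hv0 : v0 = 0 := zero_of_mul (mul_ne_zero hε h2) (by linear_combination -e8 + v3*h1)
          exact Or.inr ⟨hv0, hv1, hv2, hv3⟩
      · have hv0 : v0 = 0 := zero_of_mul h1 (by linear_combination e3 + ε*v2*hu3)
        have hv1 : v1 = 0 := zero_of_mul h1 (by linear_combination e4 + ε*v3*hu3)
        have hv2 : v2 = 0 := zero_of_mul h1 (by linear_combination e7 + ε*u2*hv1)
        have hv3 : v3 = 0 := zero_of_mul h1 (by linear_combination e8 + ε*u2*hv0)
        exact Or.inr ⟨hv0, hv1, hv2, hv3⟩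
    · have hv2 : v2 = 0 := zero_of_mul h0 (by linear_combination e5 + ε*v1*hu3)
      have hv3 : v3 = 0 := zero_of_mul h0 (by linear_combination e6 + 2*ε*v0*hu3)
      have hv0 : v0 = 0 := zero_of_mul h0 (by linear_combination e1 + ε*u2*hv2)
      have hv1 : v1 = 0 := zero_of_mul h0 (by linear_combination e2 + ε*u2*hv3)
      exact Or.inr ⟨hv0, hv1, hv2, hv3⟩
  · -- v0 = 0
    rcases eq_or_ne v2 0 with k2 | k2
    · rcases eq_or_ne v3 0 with k3 | k3
      · rcases eq_or_ne v1 0 with k1 | k1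
        · exact Or.inr ⟨hv0, k1, k2, k3⟩
        · have hu3 : u3 = 0 := zero_of_mul (mul_ne_zero hε k1) (by linear_combination -e5 + u0*k2)
          have hu2 : u2 = 0 := zero_of_mul (mul_ne_zero hε k1) (by linear_combination -e7 + u1*k2)
          have hu0 : u0 = 0 := zero_of_mul k1 (by linear_combination e2 + ε*v3*hu2)
          have hu1 : u1 = 0 := zero_of_mul k1 (by linear_combination e4 + ε*v3*hu3)
          exact Or.inl ⟨hu0, hu1, hu2, hu3⟩
      · have hu0 : u0 = 0 := zero_of_mul k3 (by linear_combination e6 + 2*ε*u3*hv0)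
        have hu1 : u1 = 0 := zero_of_mul k3 (by linear_combination e8 + ε*u2*hv0)
        have hu2 : u2 = 0 := zero_of_mul (mul_ne_zero hε k3) (by linear_combination -e2 + v1*hu0)
        have hu3 : u3 = 0 := zero_of_mul (mul_ne_zero hε k3) (by linear_combination -e4 + v1*hu1)
        exact Or.inl ⟨hu0, hu1, hu2, hu3⟩
    · have hu2 : u2 = 0 := zero_of_mul (mul_ne_zero hε k2) (by linear_combination -e1 + u0*hv0)
      have hu3 : u3 = 0 := zero_of_mul (mul_ne_zero hε k2) (by linear_combination -e3 + u1*hv0)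
      have hu0 : u0 = 0 := zero_of_mul k2 (by linear_combination e5 + ε*v1*hu3)
      have hu1 : u1 = 0 := zero_of_mul k2 (by linear_combination e7 + ε*v1*hu2)
      exact Or.inl ⟨hu0, hu1, hu2, hu3⟩
  · -- v1 = 0
    rcases eq_or_ne v2 0 with k2 | k2
    · rcases eq_or_ne v3 0 with k3 | k3
      · rcases eq_or_ne v0 0 with k0 | k0
        · exact Or.inr ⟨k0, hv1, k2, k3⟩
        · have hu3 : u3 = 0 := zero_of_mul (mul_ne_zero (mul_ne_zero two_ne_zero hε) k0)
            (by linear_combination -e6 + u0*k3)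
          have hu2 : u2 = 0 := zero_of_mul (mul_ne_zero hε k0) (by linear_combination -e8 + u1*k3)
          have hu0 : u0 = 0 := zero_of_mul k0 (by linear_combination e1 + ε*u2*k2)
          have hu1 : u1 = 0 := zero_of_mul k0 (by linear_combination e3 + ε*u3*k2)
          exact Or.inl ⟨hu0, hu1, hu2, hu3⟩
      · have hu2 : u2 = 0 := zero_of_mul (mul_ne_zero hε k3) (by linear_combination -e2 + u0*hv1)
        have hu3 : u3 = 0 := zero_of_mul (mul_ne_zero hε k3) (by linear_combination -e4 + u1*hv1)
        have hu0 : u0 = 0 := zero_of_mul k3 (by linear_combination e6 + 2*ε*v0*hu3)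
        have hu1 : u1 = 0 := zero_of_mul k3 (by linear_combination e8 + ε*v0*hu2)
        exact Or.inl ⟨hu0, hu1, hu2, hu3⟩
    · have hu0 : u0 = 0 := zero_of_mul k2 (by linear_combination e5 + ε*u3*hv1)
      have hu1 : u1 = 0 := zero_of_mul k2 (by linear_combination e7 + ε*u2*hv1)
      have hu2 : u2 = 0 := zero_of_mul (mul_ne_zero hε k2) (by linear_combination -e1 + v0*hu0)
      have hu3 : u3 = 0 := zero_of_mul (mul_ne_zero hε k2) (by linear_combination -e3 + v0*hu1)
      exact Or.inl ⟨hu0, hu1, hu2, hu3⟩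

lemma trans_of_noRankOne (L : Submodule ℂ (Matrix (Fin 4) (Fin 4) ℂ))
    (h : ∀ u v : Fin 4 → ℂ,
      (∀ A ∈ L, Matrix.trace (A * Matrix.of (fun k j => u k * v j)) = 0) →
      u = 0 ∨ v = 0) : kTrans L 1 := by
  intro x hx y
  have hx0 : x 0 ≠ 0 := hx.ne_zero 0
  set f : L →ₗ[ℂ] (Fin 4 → ℂ) :=
    { toFun := fun A => (A : Matrix (Fin 4) (Fin 4) ℂ).mulVec (x 0)
      map_add' := by intro a b; simp [Matrix.add_mulVec]
      map_smul' := by intro c a; simp [Matrix.smul_mulVec] } with hf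
  by_cases hr : LinearMap.range f = ⊤
  · have hy : y 0 ∈ LinearMap.range f := hr ▸ Submodule.mem_top
    obtain ⟨A, hA⟩ := hy
    refine ⟨A, A.2, fun i => ?_⟩
    have : i = 0 := Subsingleton.elim _ _
    subst this
    exact hA
  · obtain ⟨φ, hφ0, hφ⟩ := Submodule.exists_dual_map_eq_bot_of_lt_top
      (lt_top_iff_ne_top.mpr hr) inferInstance
    set v : Fin 4 → ℂ := fun j => φ (Pi.single j 1) with hv
    have hφsum : ∀ w : Fin 4 → ℂ, φ w = ∑ j, w j * v j := by
      intro w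
      rw [LinearMap.pi_apply_eq_sum_univ φ w]
      refine Finset.sum_congr rfl fun j _ => ?_
      have : (fun k => if j = k then (1:ℂ) else 0) = Pi.single j 1 := by
        funext k; simp [Pi.single_apply, eq_comm]
      rw [smul_eq_mul, this]
    have hmem : ∀ A ∈ L, Matrix.trace (A * Matrix.of (fun k j => (x 0) k * v j)) = 0 := by
      intro A hA
      have h1 : φ (A.mulVec (x 0)) = 0 := by
        have hmem2 : A.mulVec (x 0) ∈ LinearMap.range f := ⟨⟨A, hA⟩, rfl⟩
        have : φ (A.mulVec (x 0)) ∈ Submodule.map φ (LinearMap.range f) :=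
          Submodule.mem_map_of_mem hmem2
        rw [hφ] at this
        simpa using this
      rw [hφsum] at h1
      simp only [Matrix.trace, Matrix.mul_apply, Fin.sum_univ_four, Matrix.diag,
        Matrix.of_apply, Matrix.mulVec, dotProduct] at h1 ⊢
      linear_combination h1
    rcases h (x 0) v hmem with h' | h'
    · exact absurd h' hx0
    · refine absurd (LinearMap.ext fun w => ?_) hφ0
      rw [hφsum w, h']
      simp

lemma rank_one_decomp (T : Matrix (Fin 4) (Fin 4) ℂ) (h : T.rank = 1) :
    ∃ u w : Fin 4 → ℂ, ∀ i j, T i j = u i * w j := by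
  have h' : Module.finrank ℂ ↥(LinearMap.range T.mulVecLin) = 1 := h
  obtain ⟨v, -, hv⟩ := finrank_eq_one_iff'.mp h'
  choose c hc using fun j : Fin 4 =>
    hv ⟨T.mulVec (Pi.single j 1), LinearMap.mem_range.mpr ⟨Pi.single j 1, rfl⟩⟩
  refine ⟨(v : Fin 4 → ℂ), c, fun i j => ?_⟩
  have := congrArg (fun z : ↥(LinearMap.range T.mulVecLin) => (z : Fin 4 → ℂ) i) (hc j)
  simp only [Submodule.coe_smul, Pi.smul_apply, smul_eq_mul] at this
  rw [mul_comm, this]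
  simp [Matrix.mulVec_single]

theorem dually_transitive_in_M4 :
    ∃ L : Submodule ℂ (Matrix (Fin 4) (Fin 4) ℂ),
      L = Submodule.span ℂ {C : Matrix (Fin 4) (Fin 4) ℂ |
          ∃ A B : Matrix (Fin 2) (Fin 2) ℂ,
            C = Matrix.reindex finSumFinEquiv finSumFinEquiv
                  (Matrix.fromBlocks A (phi B) B A)} ∧
      kTrans L 1 ∧ kTrans (preAnn L) 1 ∧
      (∀ T ∈ L, T ≠ 0 → T.rank ≠ 1) ∧
      (∀ T ∈ preAnn L, T ≠ 0 → T.rank ≠ 1) := by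
  refine ⟨Lsub, span_S_eq.symm, ?_, ?_, ?_, ?_⟩
  · -- kTrans Lsub 1
    refine trans_of_noRankOne Lsub (fun u v hm => ?_)
    have hp : Matrix.of (fun k j => u k * v j) ∈ preAnn Lsub := hm
    obtain ⟨p1,p2,p3,p4,p5,p6,p7,p8⟩ := (mem_preAnn_iff _).mp hp
    simp only [Matrix.of_apply] at p1 p2 p3 p4 p5 p6 p7 p8
    rcases core (-1) (by norm_num) (u 0) (u 1) (u 2) (u 3) (v 0) (v 1) (v 2) (v 3)
      (by linear_combination p1) (by linear_combination p2) (by linear_combination p3)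
      (by linear_combination p4) (by linear_combination p5) (by linear_combination p6)
      (by linear_combination p7) (by linear_combination p8) with ⟨h0,h1,h2,h3⟩ | ⟨h0,h1,h2,h3⟩
    · left; funext i; fin_cases i <;> assumption
    · right; funext i; fin_cases i <;> assumption
  · -- kTrans (preAnn Lsub) 1
    refine trans_of_noRankOne _ (fun u v hm => ?_)
    obtain ⟨c1,c2,c3,c4,c5,c6,c7,c8⟩ :=
      Lconds_of_ann (Matrix.of fun k j => u k * v j) hm
    simp only [Matrix.of_apply] at c1 c2 c3 c4 c5 c6 c7 c8
    rcases core 1 one_ne_zero (u 0) (u 1) (u 2) (u 3) (v 0) (v 1) (v 2) (v 3)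
      (by linear_combination c1) (by linear_combination c2) (by linear_combination c3)
      (by linear_combination c4) (by linear_combination c5) (by linear_combination c6)
      (by linear_combination c7) (by linear_combination c8) with ⟨h0,h1,h2,h3⟩ | ⟨h0,h1,h2,h3⟩
    · left; funext i; fin_cases i <;> assumption
    · right; funext i; fin_cases i <;> assumption
  · -- no rank one in Lsub
    intro T hT hT0 hrk
    obtain ⟨u, w, hd⟩ := rank_one_decomp T hrk
    have hc : Lconds T := hT
    obtain ⟨c1,c2,c3,c4,c5,c6,c7,c8⟩ := hc
    rcases core 1 one_ne_zero (u 0) (u 1) (u 2) (u 3) (w 0) (w 1) (w 2) (w 3)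
      (by linear_combination c1 - hd 0 0 + hd 2 2)
      (by linear_combination c2 - hd 0 1 + hd 2 3)
      (by linear_combination c3 - hd 1 0 + hd 3 2)
      (by linear_combination c4 - hd 1 1 + hd 3 3)
      (by linear_combination c5 - hd 0 2 + hd 3 1)
      (by linear_combination c6 - hd 0 3 + 2*hd 3 0)
      (by linear_combination c7 - hd 1 2 + hd 2 1)
      (by linear_combination c8 - hd 1 3 + hd 2 0) with ⟨h0,h1,h2,h3⟩ | ⟨h0,h1,h2,h3⟩
    · exact hT0 (by ext i j; rw [hd i j]; fin_cases i <;> simp [h0,h1,h2,h3])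
    · exact hT0 (by ext i j; rw [hd i j]; fin_cases j <;> simp [h0,h1,h2,h3])
  · -- no rank one in preAnn Lsub
    intro T hT hT0 hrk
    obtain ⟨u, w, hd⟩ := rank_one_decomp T hrk
    obtain ⟨p1,p2,p3,p4,p5,p6,p7,p8⟩ := (mem_preAnn_iff T).mp hT
    rcases core (-1) (by norm_num) (u 0) (u 1) (u 2) (u 3) (w 0) (w 1) (w 2) (w 3)
      (by linear_combination p1 - hd 0 0 - hd 2 2)
      (by linear_combination p2 - hd 0 1 - hd 2 3)
      (by linear_combination p3 - hd 1 0 - hd 3 2)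
      (by linear_combination p4 - hd 1 1 - hd 3 3)
      (by linear_combination p5 - hd 0 2 - hd 3 1)
      (by linear_combination p6 - hd 0 3 - 2*hd 3 0)
      (by linear_combination p7 - hd 1 2 - hd 2 1)
      (by linear_combination p8 - hd 1 3 - hd 2 0) with ⟨h0,h1,h2,h3⟩ | ⟨h0,h1,h2,h3⟩
    · exact hT0 (by ext i j; rw [hd i j]; fin_cases i <;> simp [h0,h1,h2,h3])
    · exact hT0 (by ext i j; rw [hd i j]; fin_cases j <;> simp [h0,h1,h2,h3])
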